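/- Let u > 0, c > 0 and s > 0 be fixed. Then ∫_ℝ max(u − c·e^z, 0) d(gaussianReal m s²)(z) → u as m → −∞. -/

import Mathlib

open MeasureTheory ProbabilityTheory Filter

/-- No-collateral limit: for fixed `u, c, s > 0`, the expectation
`∫ (u - c e^z)₊ d(gaussianReal m s²)(z)` tends to `u` as the mean `m → -∞`. -/
theorem tendsto_integral_pos_part_lognormal_atBot (u c s : ℝ)
    (hu : 0 < u) (hc : 0 < c) (hs : 0 < s) :
    Tendsto (fun m : ℝ =>
        ∫ z, max (u - c * Real.exp z) 0 ∂(gaussianReal m ⟨s ^ 2, sq_nonneg s⟩))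
      atBot (nhds u) := by
  set μ := gaussianReal 0 ⟨s ^ 2, sq_nonneg s⟩ with hμ
  haveI : IsProbabilityMeasure μ := by rw [hμ]; exact instIsProbabilityMeasureGaussianReal 0 _
  have hint : ∀ m : ℝ,
      ∫ z, max (u - c * Real.exp z) 0 ∂(gaussianReal m ⟨s ^ 2, sq_nonneg s⟩)
        = ∫ z, max (u - c * Real.exp (z + m)) 0 ∂μ := by
    intro m
    have hmap : gaussianReal m ⟨s ^ 2, sq_nonneg s⟩ = μ.map (· + m) := by
      have := gaussianReal_map_add_const (μ := (0:ℝ)) (v := ⟨s ^ 2, sq_nonneg s⟩) m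
      rw [zero_add] at this
      exact this.symm
    rw [hmap, integral_map (f := fun z : ℝ => max (u - c * Real.exp z) 0) (by fun_prop : AEMeasurable (fun x : ℝ => x + m) μ)
      (((continuous_const.sub (continuous_const.mul Real.continuous_exp)).max
        continuous_const).aestronglyMeasurable :
          AEStronglyMeasurable (fun z : ℝ => max (u - c * Real.exp z) 0) _)]
  simp only [hint]
  have key : Tendsto (fun m : ℝ => ∫ z, max (u - c * Real.exp (z + m)) 0 ∂μ)
      atBot (nhds (∫ _, u ∂μ)) := by
    refine tendsto_integral_filter_of_dominated_convergence (fun _ => u) ?_ ?_ ?_ ?_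
    · exact Eventually.of_forall fun m => ((continuous_const.sub
        (continuous_const.mul (Real.continuous_exp.comp (by fun_prop)))).max
        continuous_const).aestronglyMeasurable
    · refine Eventually.of_forall fun m => ae_of_all _ fun z => ?_
      rw [Real.norm_eq_abs, abs_of_nonneg (le_max_right _ _)]
      have : u - c * Real.exp (z + m) ≤ u := by
        have := (mul_pos hc (Real.exp_pos (z + m))).le
        linarith
      exact max_le this hu.le
    · exact integrable_const u
    · refine ae_of_all _ fun z => ?_
      have h1 : Tendsto (fun m : ℝ => Real.exp (z + m)) atBot (nhds 0) := by
        exact Real.tendsto_exp_atBot.comp (tendsto_atBot_add_const_left _ z tendsto_id)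
      have h2 : Tendsto (fun m : ℝ => max (u - c * Real.exp (z + m)) 0) atBot
          (nhds (max (u - c * 0) 0)) :=
        (tendsto_const_nhds.sub (tendsto_const_nhds.mul h1)).max tendsto_const_nhds
      simpa [max_eq_left hu.le] using h2
  simpa using key
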